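/- Let f : ℝⁿ → ℝ be γ-strongly convex with differentiable conjugate, Ax̂ = b, and let d = Aᵀ S Sᵀ(Ax − b) and w = z − z_prev with ‖d‖²‖w‖² − ⟨d, w⟩² ≠ 0. With (α*, β*) from the exact minimization of h(α,β) = (1/(2γ))‖αd − βw‖² − ⟨x − x̂, αd − βw⟩, the momentum update z⁺ = z − α* d + β* w, x⁺ = ∇f*(z⁺) satisfies D_{f,z⁺}(x⁺, x̂) ≤ D_{f,z}(x, x̂) − (γ/2)·‖Sᵀ(Ax − b)‖⁴₂/‖Aᵀ S Sᵀ(Ax − b)‖²₂ whenever Sᵀ(Ax − b) ≠ 0. -/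

import Mathlib

open Matrix

private lemma dot_self_nonneg {n : ℕ} (v : Fin n → ℝ) : 0 ≤ v ⬝ᵥ v :=
  Finset.sum_nonneg fun i _ => mul_self_nonneg (v i)

theorem stmt17 {m n q : ℕ} (f : (Fin n → ℝ) → ℝ) (γ : ℝ) (hγ : 0 < γ)
    (hsc : ∀ x y z : Fin n → ℝ, (∀ v, f v ≥ f x + z ⬝ᵥ (v - x)) →
      f y ≥ f x + z ⬝ᵥ (y - x) + γ / 2 * ((y - x) ⬝ᵥ (y - x)))
    (A : Matrix (Fin m) (Fin n) ℝ) (b : Fin m → ℝ) (xhat : Fin n → ℝ)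
    (hb : A.mulVec xhat = b)
    (z zprev x : Fin n → ℝ) (hx : ∀ v, f v ≥ f x + z ⬝ᵥ (v - x))
    (S : Matrix (Fin m) (Fin q) ℝ)
    (d wvec : Fin n → ℝ)
    (hd : d = A.transpose.mulVec ((S * S.transpose).mulVec (A.mulVec x - b)))
    (hw : wvec = z - zprev)
    (hS : S.transpose.mulVec (A.mulVec x - b) ≠ 0)
    (hgram : (d ⬝ᵥ d) * (wvec ⬝ᵥ wvec) - (d ⬝ᵥ wvec) ^ 2 ≠ 0)
    (h : ℝ → ℝ → ℝ)
    (hh : ∀ a b', h a b' =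
      1 / (2 * γ) * ((a • d - b' • wvec) ⬝ᵥ (a • d - b' • wvec)) -
        (x - xhat) ⬝ᵥ (a • d - b' • wvec))
    (astar bstar : ℝ) (hopt : ∀ a b', h astar bstar ≤ h a b')
    (zplus xplus : Fin n → ℝ)
    (hz : zplus = z - astar • d + bstar • wvec)
    (hxp : ∀ v, f v ≥ f xplus + zplus ⬝ᵥ (v - xplus)) :
    f xhat - f xplus - zplus ⬝ᵥ (xhat - xplus) ≤
      f xhat - f x - z ⬝ᵥ (xhat - x) -
        γ / 2 * (S.transpose.mulVec (A.mulVec x - b) ⬝ᵥ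
          S.transpose.mulVec (A.mulVec x - b)) ^ 2 / (d ⬝ᵥ d) := by
  set r : Fin m → ℝ := A.mulVec x - b with hr
  set t : Fin q → ℝ := S.transpose.mulVec r with htdef
  set s : ℝ := t ⬝ᵥ t with hsdef
  -- s > 0
  have hspos : 0 < s := by
    rcases lt_or_eq_of_le (dot_self_nonneg t) with h0 | h0
    · exact h0
    · exact absurd (dotProduct_self_eq_zero.mp h0.symm) hS
  -- d ≠ 0, hence d ⬝ᵥ d > 0
  have hdne : d ≠ 0 := by
    intro h0
    apply hgram
    simp [h0]
  have hdd : 0 < d ⬝ᵥ d := by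
    rcases lt_or_eq_of_le (dot_self_nonneg d) with h0 | h0
    · exact h0
    · exact absurd (dotProduct_self_eq_zero.mp h0.symm) hdne
  -- key: (x - xhat) ⬝ᵥ d = s
  have hAxx : A.mulVec (x - xhat) = r := by
    rw [mulVec_sub, hb, hr]
  have hxd : (x - xhat) ⬝ᵥ d = s := by
    rw [hd, dotProduct_mulVec, vecMul_transpose, hAxx, ← mulVec_mulVec,
      dotProduct_mulVec, ← mulVec_transpose, hsdef, htdef]
  -- upper bound lemma: u ⬝ᵥ p ≤ 1/(2γ) ‖u‖² + γ/2 ‖p‖²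
  have hub : ∀ u p : Fin n → ℝ,
      u ⬝ᵥ p ≤ 1 / (2 * γ) * (u ⬝ᵥ u) + γ / 2 * (p ⬝ᵥ p) := by
    intro u p
    have h0 : (0:ℝ) ≤ (u - γ • p) ⬝ᵥ (u - γ • p) := dot_self_nonneg _
    have hc : p ⬝ᵥ u = u ⬝ᵥ p := dotProduct_comm p u
    simp only [dotProduct_sub, sub_dotProduct, smul_dotProduct, dotProduct_smul,
      smul_eq_mul, hc] at h0
    have h2γ : (0:ℝ) < 2 * γ := by linarith
    rw [← sub_nonneg]
    have heq : 1 / (2 * γ) * (u ⬝ᵥ u) + γ / 2 * (p ⬝ᵥ p) - u ⬝ᵥ p =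
        (u ⬝ᵥ u + γ * γ * (p ⬝ᵥ p) - 2 * γ * (u ⬝ᵥ p)) / (2 * γ) := by
      field_simp
    rw [heq]
    apply div_nonneg _ (le_of_lt h2γ)
    nlinarith
  -- main inequality : D(zplus) - D(z) ≤ h astar bstar
  have hsm := hsc x xplus z hx
  have hmain : f xhat - f xplus - zplus ⬝ᵥ (xhat - xplus) ≤
      f xhat - f x - z ⬝ᵥ (xhat - x) + h astar bstar := by
    have hub' := hub (zplus - z) (xplus - x)
    have hdot : ∀ u v : Fin n → ℝ, u ⬝ᵥ v = ∑ i, u i * v i := fun _ _ => rfl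
    have hexp : h astar bstar =
        1 / (2 * γ) * ((z - zplus) ⬝ᵥ (z - zplus)) - (x - xhat) ⬝ᵥ (z - zplus) := by
      rw [hh]
      have : astar • d - bstar • wvec = z - zplus := by
        rw [hz]; abel
      rw [this]
    rw [hexp]
    have e1 : (zplus - z) ⬝ᵥ (xplus - x) =
        zplus ⬝ᵥ xplus - zplus ⬝ᵥ x - z ⬝ᵥ xplus + z ⬝ᵥ x := by
      simp [dotProduct_sub, sub_dotProduct]; ring
    have e2 : (z - zplus) ⬝ᵥ (z - zplus) = (zplus - z) ⬝ᵥ (zplus - z) := by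
      simp [dotProduct_sub, sub_dotProduct]; ring
    have e3 : (x - xhat) ⬝ᵥ (z - zplus) =
        x ⬝ᵥ z - x ⬝ᵥ zplus - xhat ⬝ᵥ z + xhat ⬝ᵥ zplus := by
      simp [dotProduct_sub, sub_dotProduct]; ring
    have e4 : z ⬝ᵥ (xplus - x) = z ⬝ᵥ xplus - z ⬝ᵥ x := by
      simp [dotProduct_sub]
    have e5 : zplus ⬝ᵥ (xhat - xplus) = zplus ⬝ᵥ xhat - zplus ⬝ᵥ xplus := by
      simp [dotProduct_sub]
    have e6 : z ⬝ᵥ (xhat - x) = z ⬝ᵥ xhat - z ⬝ᵥ x := by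
      simp [dotProduct_sub]
    have c1 : x ⬝ᵥ z = z ⬝ᵥ x := dotProduct_comm _ _
    have c2 : x ⬝ᵥ zplus = zplus ⬝ᵥ x := dotProduct_comm _ _
    have c3 : xhat ⬝ᵥ z = z ⬝ᵥ xhat := dotProduct_comm _ _
    have c4 : xhat ⬝ᵥ zplus = zplus ⬝ᵥ xhat := dotProduct_comm _ _
    rw [e1] at hub'
    rw [e4] at hsm
    rw [e2, e3, e5, e6]
    linarith [hsm, hub', c1, c2, c3, c4]
  -- choose α₀ = γ s / ‖d‖²
  have hval : h (γ * s / (d ⬝ᵥ d)) 0 = -(γ / 2 * s ^ 2 / (d ⬝ᵥ d)) := by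
    rw [hh]
    simp only [zero_smul, sub_zero, smul_dotProduct, dotProduct_smul, smul_eq_mul, hxd]
    field_simp
    ring
  have hle := hopt (γ * s / (d ⬝ᵥ d)) 0
  rw [hval] at hle
  linarith
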